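/- Given polynomial-time sets X_e, X_i ⊆ ℕ, define trees T_e and T_i as subtrees of {0,1}*: T_e contains 1^y for all y, and 1^x 0 for each x ∈ X_e (similarly T_i). Then X_e ⊆ X_i if and only if there is a root-preserving embedding of T_e into T_i. -/

import Mathlib

/-- A set of natural numbers (given by its characteristic function) is polynomial time. -/
def PolyTimeSet (X : ℕ → Bool) : Prop :=
  Nonempty (Turing.TM2ComputableInPolyTime Computability.encodingNatBool.encode
    Computability.encodingBoolBool.encode X)

/-- `f` is a root-preserving embedding of the subtree `T` into the subtree `S`: an injective
map sending the root to the root and preserving the predecessor `List.dropLast`. -/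
def IsRootEmbedding {α : Type*} (T S : Set (List α)) (f : List α → List α) : Prop :=
  Set.MapsTo f T S ∧ Set.InjOn f T ∧ f [] = [] ∧ ∀ w ∈ T, f w.dropLast = (f w).dropLast

/-- The subtree of `{0,1}*` associated to a set `X ⊆ ℕ`: all strings `1^y`, together with
`1^x 0` for each `x ∈ X`. -/
def setTree (X : ℕ → Bool) : Set (List (Fin 2)) :=
  {w | (∃ y, w = List.replicate y (1 : Fin 2)) ∨
       (∃ x, X x = true ∧ w = List.replicate x (1 : Fin 2) ++ [(0 : Fin 2)])}

lemma setTree_dropLast_mem {X : ℕ → Bool} {w : List (Fin 2)} (h : w ∈ setTree X) :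
    w.dropLast ∈ setTree X := by
  rcases h with ⟨y, rfl⟩ | ⟨x, hx, rfl⟩
  · exact Or.inl ⟨y - 1, by rw [List.dropLast_replicate]⟩
  · exact Or.inl ⟨x, by simp⟩

lemma nil_mem_setTree (X : ℕ → Bool) : [] ∈ setTree X :=
  Or.inl ⟨0, rfl⟩

/-- A root embedding preserves lengths. -/
lemma rootEmbedding_length {X Y : ℕ → Bool} {f : List (Fin 2) → List (Fin 2)}
    (hf : IsRootEmbedding (setTree X) (setTree Y) f) :
    ∀ w ∈ setTree X, (f w).length = w.length := by
  obtain ⟨hmaps, hinj, hnil, hdrop⟩ := hf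
  suffices H : ∀ n, ∀ w ∈ setTree X, w.length = n → (f w).length = n by
    intro w hw; exact H w.length w hw rfl
  intro n
  induction n with
  | zero =>
    intro w hw hlen
    rw [List.length_eq_zero_iff] at hlen
    subst hlen; rw [hnil]; rfl
  | succ n ih =>
    intro w hw hlen
    have hwne : w ≠ [] := by
      intro h; subst h; simp at hlen
    have hd : f w.dropLast = (f w).dropLast := hdrop w hw
    have hdl : (f w.dropLast).length = n := by
      apply ih _ (setTree_dropLast_mem hw)
      rw [List.length_dropLast, hlen]; rfl
    have hfne : f w ≠ [] := by
      intro h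
      have : w = [] := hinj hw (nil_mem_setTree X) (by rw [h, hnil])
      exact hwne this
    have h0 : (f w).length ≠ 0 := fun h => hfne (List.length_eq_zero_iff.mp h)
    rw [hd, List.length_dropLast] at hdl
    omega

/-- Elements of `setTree Y` of length `n + 1` are `1^(n+1)` or (if `n ∈ Y`) `1^n 0`. -/
lemma setTree_length_succ {Y : ℕ → Bool} {w : List (Fin 2)} {n : ℕ}
    (hw : w ∈ setTree Y) (hlen : w.length = n + 1) :
    w = List.replicate (n + 1) (1 : Fin 2) ∨
      (Y n = true ∧ w = List.replicate n (1 : Fin 2) ++ [(0 : Fin 2)]) := by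
  rcases hw with ⟨y, rfl⟩ | ⟨x, hx, rfl⟩
  · left; simp at hlen; rw [hlen]
  · right
    have : x = n := by simpa using hlen
    subst this
    exact ⟨hx, rfl⟩

/-- For polynomial-time sets `X` and `Y`, `X ⊆ Y` iff there is a root-preserving embedding
of `T_X` into `T_Y`. -/
theorem subset_iff_rootEmbedding (X Y : ℕ → Bool)
    (hX : PolyTimeSet X) (hY : PolyTimeSet Y) :
    (∀ n, X n = true → Y n = true) ↔
      ∃ f, IsRootEmbedding (setTree X) (setTree Y) f := by
  constructor
  · intro h
    refine ⟨id, ?_, fun a _ b _ hab => hab, rfl, fun w _ => rfl⟩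
    intro w hw
    rcases hw with ⟨y, rfl⟩ | ⟨x, hx, rfl⟩
    · exact Or.inl ⟨y, rfl⟩
    · exact Or.inr ⟨x, h x hx, rfl⟩
  · rintro ⟨f, hf⟩ n hn
    have hlen := rootEmbedding_length hf
    obtain ⟨hmaps, hinj, hnil, hdrop⟩ := hf
    set a : List (Fin 2) := List.replicate n (1 : Fin 2) ++ [(0 : Fin 2)] with ha
    set b : List (Fin 2) := List.replicate (n + 1) (1 : Fin 2) with hb
    have hab : a ≠ b := by
      simp only [ha, hb, List.replicate_succ']
      intro h
      have := List.append_cancel_left h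
      simp at this
    have haT : a ∈ setTree X := Or.inr ⟨n, hn, rfl⟩
    have hbT : b ∈ setTree X := Or.inl ⟨n + 1, rfl⟩
    have hfa : f a ∈ setTree Y := hmaps haT
    have hfb : f b ∈ setTree Y := hmaps hbT
    have hla : (f a).length = n + 1 := by rw [hlen a haT]; simp [ha]
    have hlb : (f b).length = n + 1 := by rw [hlen b hbT]; simp [hb]
    rcases setTree_length_succ hfa hla with h1 | ⟨hy, _⟩
    · rcases setTree_length_succ hfb hlb with h2 | ⟨hy, _⟩
      · exact absurd (hinj haT hbT (h1.trans h2.symm)) hab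
      · exact hy
    · exact hy
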